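/- Let k be any field, R = k[x_1,...,x_r], and I a monomial ideal with R/I artinian. If multiplication by ℓ = x_1 + x_2 + ... + x_r has maximal rank [R/I]_i → [R/I]_{i+1} for all i, then R/I has the Weak Lefschetz Property (i.e., a general linear form also has maximal rank in every degree); conversely, if ×ℓ fails maximal rank in some degree then R/I fails the WLP, provided k is infinite. -/

import Mathlib

open MvPolynomial

/-- The dimension of the degree-`i` component of the graded algebra `R/I`, where
`R = k[x_1,...,x_r]` is standard graded: it is the image of the space of homogeneous
polynomials of degree `i` in the quotient. -/
noncomputable def hilb {k : Type*} [Field k] {σ : Type*} (I : Ideal (MvPolynomial σ k))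
    (i : ℕ) : ℕ :=
  Module.finrank k ((homogeneousSubmodule σ k i).map (Ideal.Quotient.mkₐ k I).toLinearMap)

/-- Injectivity of the multiplication map `×f : [R/I]_i → [R/I]_{i + deg f}`. -/
def mulInj {k : Type*} [Field k] {σ : Type*} (I : Ideal (MvPolynomial σ k))
    (f : MvPolynomial σ k) (i : ℕ) : Prop :=
  ∀ g ∈ homogeneousSubmodule σ k i, f * g ∈ I → g ∈ I

/-- Surjectivity of the multiplication map `×f : [R/I]_i → [R/I]_j` (with `j = i + deg f`). -/
def mulSurj {k : Type*} [Field k] {σ : Type*} (I : Ideal (MvPolynomial σ k))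
    (f : MvPolynomial σ k) (i j : ℕ) : Prop :=
  ∀ g ∈ homogeneousSubmodule σ k j, ∃ h ∈ homogeneousSubmodule σ k i, g - f * h ∈ I

namespace Stmt19
variable {k : Type*} [Field k] {r : ℕ}

noncomputable def scale (c : Fin r → k) : MvPolynomial (Fin r) k →ₐ[k] MvPolynomial (Fin r) k :=
  aeval (fun j => C (c j) * X j)

lemma scale_monomial (c : Fin r → k) (v : Fin r →₀ ℕ) (a : k) :
    scale c (monomial v a) = monomial v ((∏ j, c j ^ v j) * a) := by
  rw [scale, aeval_monomial]
  have h1 : (v.prod fun i k_1 => (C (c i) * X i : MvPolynomial (Fin r) k) ^ k_1)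
      = C (∏ j ∈ v.support, c j ^ v j) * (v.prod fun i e => (X i : MvPolynomial (Fin r) k) ^ e) := by
    rw [Finsupp.prod, Finsupp.prod, map_prod, ← Finset.prod_mul_distrib]
    refine Finset.prod_congr rfl fun j _ => ?_
    rw [mul_pow, map_pow]
  rw [h1, monomial_eq]
  have h2 : (∏ j ∈ v.support, c j ^ v j) = ∏ j, c j ^ v j := by
    refine Finset.prod_subset (Finset.subset_univ _) fun j _ hj => ?_
    simp [Finsupp.notMem_support_iff.mp hj]
  rw [h2, algebraMap_eq, map_mul]
  ring

lemma coeff_scale (c : Fin r → k) (p : MvPolynomial (Fin r) k) (m : Fin r →₀ ℕ) :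
    coeff m (scale c p) = (∏ j, c j ^ m j) * coeff m p := by
  conv_lhs => rw [p.as_sum, map_sum]
  rw [Finset.sum_congr rfl (fun v _ => scale_monomial c v (coeff v p)), coeff_sum]
  by_cases hm : m ∈ p.support
  · rw [Finset.sum_eq_single m]
    · simp [coeff_monomial]
    · intro v _ hv; rw [coeff_monomial, if_neg hv]

    · intro h; exact absurd hm h
  · rw [Finset.sum_eq_zero (fun v hv => by
        rw [coeff_monomial, if_neg (by rintro rfl; exact hm hv)]),
      MvPolynomial.notMem_support_iff.mp hm, mul_zero]


lemma prod_pow_ne_zero {c : Fin r → k} (hc : ∀ j, c j ≠ 0) (m : Fin r →₀ ℕ) :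
    (∏ j, c j ^ m j) ≠ 0 :=
  Finset.prod_ne_zero_iff.mpr fun j _ => pow_ne_zero _ (hc j)

lemma support_scale {c : Fin r → k} (hc : ∀ j, c j ≠ 0) (p : MvPolynomial (Fin r) k) :
    (scale c p).support = p.support := by
  ext m
  simp only [MvPolynomial.mem_support_iff, coeff_scale, mul_ne_zero_iff]
  exact ⟨fun h => h.2, fun h => ⟨prod_pow_ne_zero hc m, h⟩⟩

lemma scale_mem_iff {c : Fin r → k} (hc : ∀ j, c j ≠ 0) (S : Set (Fin r →₀ ℕ))
    (p : MvPolynomial (Fin r) k) :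
    scale c p ∈ Ideal.span ((fun s => (monomial s (1 : k))) '' S) ↔
      p ∈ Ideal.span ((fun s => (monomial s (1 : k))) '' S) := by
  rw [mem_ideal_span_monomial_image, mem_ideal_span_monomial_image, support_scale hc]

lemma scale_isHomogeneous {c : Fin r → k} {p : MvPolynomial (Fin r) k} {n : ℕ}
    (hp : p ∈ homogeneousSubmodule (Fin r) k n) :
    scale c p ∈ homogeneousSubmodule (Fin r) k n := by
  rw [mem_homogeneousSubmodule] at hp ⊢
  intro d hd
  refine hp ?_
  intro h0
  rw [coeff_scale, h0, mul_zero] at hd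
  exact hd rfl

lemma scale_scale_inv {c : Fin r → k} (hc : ∀ j, c j ≠ 0) (p : MvPolynomial (Fin r) k) :
    scale (fun j => (c j)⁻¹) (scale c p) = p := by
  apply MvPolynomial.ext
  intro m
  rw [coeff_scale, coeff_scale, ← mul_assoc, ← Finset.prod_mul_distrib]
  rw [Finset.prod_congr rfl (fun j _ => by
    rw [← mul_pow, inv_mul_cancel₀ (hc j), one_pow])]
  simp

noncomputable def ell (c : Fin r → k) : MvPolynomial (Fin r) k := ∑ j, C (c j) * X j

lemma scale_X (c : Fin r → k) (j : Fin r) : scale c (X j) = C (c j) * X j := by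
  simp [scale]

lemma scale_sum_X (c : Fin r → k) :
    scale c (∑ j, (X j : MvPolynomial (Fin r) k)) = ell c := by
  rw [map_sum, ell]
  exact Finset.sum_congr rfl fun j _ => scale_X c j

lemma scale_inv_ell {c : Fin r → k} (hc : ∀ j, c j ≠ 0) :
    scale (fun j => (c j)⁻¹) (ell c) = ∑ j, (X j : MvPolynomial (Fin r) k) := by
  rw [ell, map_sum]
  refine Finset.sum_congr rfl fun j _ => ?_
  rw [map_mul, scale_X]
  rw [show (scale (fun j => (c j)⁻¹)) (C (c j)) = C (c j) from aeval_C _ _, ← mul_assoc, ← map_mul,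
    mul_inv_cancel₀ (hc j), map_one, one_mul]

lemma ell_mem : ∀ c : Fin r → k, ell c ∈ homogeneousSubmodule (Fin r) k 1 := fun c =>
  Submodule.sum_mem _ fun j _ => by
    rw [show (C (c j) * X j : MvPolynomial (Fin r) k) = c j • X j by rw [smul_eq_C_mul]]
    exact Submodule.smul_mem _ _ ((mem_homogeneousSubmodule _ _).mpr (isHomogeneous_X _ _))

lemma transfer_inj {S : Set (Fin r →₀ ℕ)} {I : Ideal (MvPolynomial (Fin r) k)}
    (hI : I = Ideal.span ((fun s => (monomial s (1 : k))) '' S))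
    {c : Fin r → k} (hc : ∀ j, c j ≠ 0) (i : ℕ) (h : mulInj I (ell c) i) :
    mulInj I (∑ j, (X j : MvPolynomial (Fin r) k)) i := by
  intro g hg hmul
  subst hI
  have h1 : scale c (∑ j, (X j : MvPolynomial (Fin r) k)) * scale c g ∈
      Ideal.span ((fun s => (monomial s (1 : k))) '' S) := by
    rw [← map_mul]
    exact (scale_mem_iff hc S _).mpr hmul
  rw [scale_sum_X] at h1
  exact (scale_mem_iff hc S g).mp (h _ (scale_isHomogeneous hg) h1)

lemma transfer_surj {S : Set (Fin r →₀ ℕ)} {I : Ideal (MvPolynomial (Fin r) k)}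
    (hI : I = Ideal.span ((fun s => (monomial s (1 : k))) '' S))
    {c : Fin r → k} (hc : ∀ j, c j ≠ 0) (i j' : ℕ) (h : mulSurj I (ell c) i j') :
    mulSurj I (∑ j, (X j : MvPolynomial (Fin r) k)) i j' := by
  intro g hg
  subst hI
  obtain ⟨h0, hh0, hmem⟩ := h (scale c g) (scale_isHomogeneous hg)
  have hc' : ∀ j, (fun j => (c j)⁻¹) j ≠ 0 := fun j => inv_ne_zero (hc j)
  refine ⟨scale (fun j => (c j)⁻¹) h0, scale_isHomogeneous hh0, ?_⟩
  have h2 := (scale_mem_iff hc' S _).mpr hmem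
  rw [map_sub, map_mul, scale_scale_inv hc, scale_inv_ell hc] at h2
  exact h2


lemma exists_pow_bound (S : Set (Fin r →₀ ℕ)) (I : Ideal (MvPolynomial (Fin r) k))
    (hI : I = Ideal.span ((fun s => (monomial s (1 : k))) '' S))
    (hart : Module.Finite k (MvPolynomial (Fin r) k ⧸ I)) (j : Fin r) :
    ∃ n : ℕ, ∃ s ∈ S, s ≤ Finsupp.single j n := by
  have hnli : ¬ LinearIndependent k (fun n : ℕ =>
      Ideal.Quotient.mk I (X j ^ n : MvPolynomial (Fin r) k)) :=
    Module.Finite.not_linearIndependent_of_infinite _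
  rw [linearIndependent_iff'] at hnli
  push_neg at hnli
  obtain ⟨t, g, hsum, n₀, hn₀t, hg⟩ := hnli
  have heq : (∑ n ∈ t, monomial (Finsupp.single j n) (g n) : MvPolynomial (Fin r) k)
      = ∑ n ∈ t, g n • (X j ^ n : MvPolynomial (Fin r) k) := by
    refine Finset.sum_congr rfl fun n _ => ?_
    rw [X_pow_eq_monomial, smul_monomial, smul_eq_mul, mul_one]
  have hsum' : Ideal.Quotient.mkₐ k I (∑ n ∈ t, monomial (Finsupp.single j n) (g n)) = 0 := by
    rw [heq, map_sum]
    simp_rw [map_smul]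
    rw [← hsum]
    rfl
  have hp : (∑ n ∈ t, monomial (Finsupp.single j n) (g n) : MvPolynomial (Fin r) k) ∈ I := by
    rwa [Ideal.Quotient.mkₐ_eq_mk, Ideal.Quotient.eq_zero_iff_mem] at hsum'
  rw [hI, mem_ideal_span_monomial_image] at hp
  have hmem : Finsupp.single j n₀ ∈
      (∑ n ∈ t, monomial (Finsupp.single j n) (g n) : MvPolynomial (Fin r) k).support := by
    rw [MvPolynomial.mem_support_iff, coeff_sum]
    rw [Finset.sum_eq_single n₀ (fun n _ hn => by
        rw [coeff_monomial, if_neg (fun h => hn (Finsupp.single_injective j ?_))]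
        · exact h
      ) (fun h => absurd hn₀t h)]
    · rwa [coeff_monomial, if_pos rfl]
  obtain ⟨s, hs, hle⟩ := hp _ hmem
  exact ⟨n₀, s, hs, hle⟩

lemma degree_eq_sum_univ (m : Fin r →₀ ℕ) : (Finsupp.weight (1 : Fin r → ℕ)) m = ∑ j, m j := by
  rw [Finsupp.weight_apply, Finsupp.sum]
  rw [Finset.sum_subset (Finset.subset_univ m.support)
    (fun j _ hj => by simp [Finsupp.notMem_support_iff.mp hj])]
  simp

lemma high_degree_mem (S : Set (Fin r →₀ ℕ)) (I : Ideal (MvPolynomial (Fin r) k))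
    (hI : I = Ideal.span ((fun s => (monomial s (1 : k))) '' S))
    (hart : Module.Finite k (MvPolynomial (Fin r) k ⧸ I)) :
    ∃ D : ℕ, ∀ i, D ≤ i → ∀ p ∈ homogeneousSubmodule (Fin r) k i, p ∈ I := by
  choose N s hsS hsle using exists_pow_bound S I hI hart
  refine ⟨1 + ∑ j, N j, fun i hi p hp => ?_⟩
  rw [hI, mem_ideal_span_monomial_image]
  intro m hm
  have hdeg : ∑ j, m j = i := by
    rw [← degree_eq_sum_univ]
    exact hp (MvPolynomial.mem_support_iff.mp hm)
  have hex : ∃ j, N j ≤ m j := by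
    by_contra hcon
    push_neg at hcon
    have h1 : ∑ j, (m j + 1) ≤ ∑ j, N j := Finset.sum_le_sum fun j _ => hcon j
    rw [Finset.sum_add_distrib] at h1
    simp only [Finset.sum_const, Finset.card_univ, Fintype.card_fin, smul_eq_mul, mul_one] at h1
    omega
  obtain ⟨j, hj⟩ := hex
  exact ⟨s j, hsS j, le_trans (hsle j) (by
    intro a
    classical
    by_cases ha : j = a
    · subst ha; simp [Finsupp.single_apply, hj]
    · simp [Finsupp.single_apply, ha])⟩


instance fd_homog (n : ℕ) : FiniteDimensional k (homogeneousSubmodule (Fin r) k n) := by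
  rw [homogeneousSubmodule_eq_finsupp_supported]
  have hfin : {d : Fin r →₀ ℕ | d.degree = n}.Finite := by
    apply Set.Finite.subset (Set.finite_Iic (Finsupp.equivFunOnFinite.symm fun _ => n))
    intro d hd
    rw [Set.mem_Iic, Finsupp.le_def]
    intro j
    calc d j ≤ d.degree := Finsupp.le_degree j d
    _ = n := hd
  haveI : Finite ↥{d : Fin r →₀ ℕ | d.degree = n} := hfin.to_subtype
  exact Module.Finite.equiv (AddMonoidAlgebra.supportedEquivFinsupp
    {d : Fin r →₀ ℕ | d.degree = n}).symm


noncomputable def U (I : Ideal (MvPolynomial (Fin r) k)) (i : ℕ) :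
    Submodule k (homogeneousSubmodule (Fin r) k i) :=
  Submodule.comap (homogeneousSubmodule (Fin r) k i).subtype (Submodule.restrictScalars k I)

lemma mem_U {I : Ideal (MvPolynomial (Fin r) k)} {i : ℕ}
    (g : homogeneousSubmodule (Fin r) k i) : g ∈ U I i ↔ (g : MvPolynomial (Fin r) k) ∈ I :=
  Iff.rfl

noncomputable def mulHom (ℓ : MvPolynomial (Fin r) k)
    (hℓ : ℓ ∈ homogeneousSubmodule (Fin r) k 1) (i : ℕ) :
    homogeneousSubmodule (Fin r) k i →ₗ[k] homogeneousSubmodule (Fin r) k (i + 1) where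
  toFun g := ⟨ℓ * g.1, by
    have h := MvPolynomial.IsHomogeneous.mul ((mem_homogeneousSubmodule _ _).mp hℓ)
      ((mem_homogeneousSubmodule _ _).mp g.2)
    rw [add_comm] at h
    exact (mem_homogeneousSubmodule _ _).mpr h⟩
  map_add' a b := by ext; simp [mul_add]
  map_smul' a b := by ext; simp [mul_smul_comm]

lemma coe_mulHom (ℓ : MvPolynomial (Fin r) k) (hℓ : ℓ ∈ homogeneousSubmodule (Fin r) k 1)
    (i : ℕ) (g : homogeneousSubmodule (Fin r) k i) :
    (mulHom ℓ hℓ i g : MvPolynomial (Fin r) k) = ℓ * g := rfl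

noncomputable def mulQ (I : Ideal (MvPolynomial (Fin r) k)) (ℓ : MvPolynomial (Fin r) k)
    (hℓ : ℓ ∈ homogeneousSubmodule (Fin r) k 1) (i : ℕ) :
    (homogeneousSubmodule (Fin r) k i ⧸ U I i) →ₗ[k]
      (homogeneousSubmodule (Fin r) k (i + 1) ⧸ U I (i + 1)) :=
  Submodule.mapQ (U I i) (U I (i + 1)) (mulHom ℓ hℓ i) (by
    intro g hg
    rw [Submodule.mem_comap, mem_U, coe_mulHom]
    exact Ideal.mul_mem_left I ℓ ((mem_U g).mp hg))

lemma mulQ_mk (I : Ideal (MvPolynomial (Fin r) k)) (ℓ : MvPolynomial (Fin r) k)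
    (hℓ : ℓ ∈ homogeneousSubmodule (Fin r) k 1) (i : ℕ) (g : homogeneousSubmodule (Fin r) k i) :
    mulQ I ℓ hℓ i (Submodule.Quotient.mk g) = Submodule.Quotient.mk (mulHom ℓ hℓ i g) := by
  rw [mulQ, Submodule.mapQ_apply]

lemma inj_iff (I : Ideal (MvPolynomial (Fin r) k)) (ℓ : MvPolynomial (Fin r) k)
    (hℓ : ℓ ∈ homogeneousSubmodule (Fin r) k 1) (i : ℕ) :
    Function.Injective (mulQ I ℓ hℓ i) ↔ mulInj I ℓ i := by
  rw [← LinearMap.ker_eq_bot, LinearMap.ker_eq_bot']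
  constructor
  · intro h g hg hmul
    have h0 : mulQ I ℓ hℓ i (Submodule.Quotient.mk ⟨g, hg⟩) = 0 := by
      rw [mulQ_mk, Submodule.Quotient.mk_eq_zero, mem_U, coe_mulHom]
      exact hmul
    have := h _ h0
    rwa [Submodule.Quotient.mk_eq_zero, mem_U] at this
  · intro h m hm
    obtain ⟨g, rfl⟩ := Submodule.Quotient.mk_surjective _ m
    rw [mulQ_mk, Submodule.Quotient.mk_eq_zero, mem_U, coe_mulHom] at hm
    rw [Submodule.Quotient.mk_eq_zero, mem_U]
    exact h g g.2 hm

lemma surj_iff (I : Ideal (MvPolynomial (Fin r) k)) (ℓ : MvPolynomial (Fin r) k)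
    (hℓ : ℓ ∈ homogeneousSubmodule (Fin r) k 1) (i : ℕ) :
    Function.Surjective (mulQ I ℓ hℓ i) ↔ mulSurj I ℓ i (i + 1) := by
  constructor
  · intro h g hg
    obtain ⟨m, hm⟩ := h (Submodule.Quotient.mk (⟨g, hg⟩ : homogeneousSubmodule (Fin r) k (i+1)))
    obtain ⟨hh, rfl⟩ := Submodule.Quotient.mk_surjective _ m
    rw [mulQ_mk, Submodule.Quotient.eq] at hm
    refine ⟨hh, hh.2, ?_⟩
    have h1 := (mem_U _).mp hm
    rw [Submodule.coe_sub, coe_mulHom] at h1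
    have h2 : ℓ * (hh : MvPolynomial (Fin r) k) - g ∈ I := h1
    have h3 := neg_mem h2
    rwa [neg_sub] at h3
  · intro h m
    obtain ⟨g, rfl⟩ := Submodule.Quotient.mk_surjective _ m
    obtain ⟨hh, hhmem, hsub⟩ := h g g.2
    refine ⟨Submodule.Quotient.mk ⟨hh, hhmem⟩, ?_⟩
    rw [mulQ_mk, Submodule.Quotient.eq]
    rw [mem_U, Submodule.coe_sub, coe_mulHom]
    have := neg_mem hsub
    rwa [neg_sub] at this

lemma X_mem_homog (j : Fin r) : (X j : MvPolynomial (Fin r) k) ∈ homogeneousSubmodule (Fin r) k 1 :=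
  (mem_homogeneousSubmodule _ _).mpr (isHomogeneous_X _ _)


lemma mulQ_ell (I : Ideal (MvPolynomial (Fin r) k)) (c : Fin r → k) (i : ℕ) :
    mulQ I (ell c) (ell_mem c) i = ∑ j, c j • mulQ I (X j) (X_mem_homog j) i := by
  apply LinearMap.ext
  intro m
  obtain ⟨g, rfl⟩ := Submodule.Quotient.mk_surjective _ m
  rw [mulQ_mk]
  rw [LinearMap.sum_apply]
  simp_rw [LinearMap.smul_apply, mulQ_mk]
  have hmk : ∀ x : homogeneousSubmodule (Fin r) k (i+1),
      Submodule.Quotient.mk (p := U I (i+1)) x = Submodule.mkQ (U I (i+1)) x := fun x => rfl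
  simp_rw [hmk, ← map_smul, ← map_sum]
  congr 1
  apply Subtype.ext
  rw [coe_mulHom]
  have hcoe : ((∑ x, mulHom (X x) (X_mem_homog x) i (c x • g) :
      homogeneousSubmodule (Fin r) k (i+1)) : MvPolynomial (Fin r) k)
      = ∑ x, (X x : MvPolynomial (Fin r) k) * (c x • (g : MvPolynomial (Fin r) k)) := by
    push_cast [coe_mulHom]
    rfl
  rw [hcoe, ell, Finset.sum_mul]
  refine Finset.sum_congr rfl fun j _ => ?_
  rw [smul_eq_C_mul]
  ring

section Poly
variable {V W : Type*} [AddCommGroup V] [Module k V] [AddCommGroup W] [Module k W]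
  [FiniteDimensional k V] [FiniteDimensional k W]

lemma det_poly (T : Fin r → (V →ₗ[k] V)) :
    ∃ f : MvPolynomial (Fin r) k, ∀ c : Fin r → k,
      eval c f = LinearMap.det (∑ j, c j • T j) := by
  let b := Module.finBasis k V
  let A : Fin r → Matrix _ _ k := fun j => LinearMap.toMatrix b b (T j)
  refine ⟨(∑ j, (X j : MvPolynomial (Fin r) k) • (A j).map C).det, fun c => ?_⟩
  have h1 := RingHom.map_det (eval c) (∑ j, (X j : MvPolynomial (Fin r) k) • (A j).map C)
  rw [RingHom.mapMatrix_apply] at h1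
  rw [h1]
  have h2 : (∑ j, (X j : MvPolynomial (Fin r) k) • (A j).map C).map (eval c)
      = LinearMap.toMatrix b b (∑ j, c j • T j) := by
    rw [map_sum]
    simp_rw [map_smul]
    ext a b'
    rw [Matrix.map_apply, Matrix.sum_apply, map_sum, Matrix.sum_apply]
    simp [Matrix.smul_apply, Matrix.map_apply, smul_eq_mul, A]
  rw [h2, LinearMap.det_toMatrix]

lemma bij_of_det_ne_zero {f : V →ₗ[k] V} (h : LinearMap.det f ≠ 0) : Function.Bijective f := by
  have hco : ((LinearMap.equivOfDetNeZero f h : V ≃ₗ[k] V) : V →ₗ[k] V) = f :=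
    LinearEquiv.coe_ofIsUnitDet _
  have hb := (LinearMap.equivOfDetNeZero f h).bijective
  rwa [show ⇑(LinearMap.equivOfDetNeZero f h) = ⇑f from by rw [← LinearEquiv.coe_coe, hco]] at hb

lemma poly_lemma (T : Fin r → (V →ₗ[k] W)) (c₀ : Fin r → k)
    (h : Function.Injective ⇑(∑ j, c₀ j • T j) ∨ Function.Surjective ⇑(∑ j, c₀ j • T j)) :
    ∃ f : MvPolynomial (Fin r) k, eval c₀ f ≠ 0 ∧
      ∀ c : Fin r → k, eval c f ≠ 0 →
        (Function.Injective ⇑(∑ j, c j • T j) ∨ Function.Surjective ⇑(∑ j, c j • T j)) := by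
  cases h with
  | inl hinj =>
    obtain ⟨p, hp⟩ := (∑ j, c₀ j • T j).exists_leftInverse_of_injective
      (LinearMap.ker_eq_bot.mpr hinj)
    obtain ⟨f, hf⟩ := det_poly (fun j => p ∘ₗ T j)
    have hcomp : ∀ c : Fin r → k, (∑ j, c j • (p ∘ₗ T j)) = p ∘ₗ (∑ j, c j • T j) := by
      intro c
      ext v
      simp [LinearMap.sum_apply, map_sum]
    refine ⟨f, ?_, fun c hc => ?_⟩
    · rw [hf, hcomp, hp]
      simp
    · rw [hf, hcomp] at hc
      left
      have hb := bij_of_det_ne_zero hc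
      have : Function.Injective (⇑p ∘ ⇑(∑ j, c j • T j)) := by
        rw [← LinearMap.coe_comp]
        exact hb.injective
      exact Function.Injective.of_comp this
  | inr hsurj =>
    obtain ⟨q, hq⟩ := (∑ j, c₀ j • T j).exists_rightInverse_of_surjective
      (LinearMap.range_eq_top.mpr hsurj)
    obtain ⟨f, hf⟩ := det_poly (fun j => T j ∘ₗ q)
    have hcomp : ∀ c : Fin r → k, (∑ j, c j • (T j ∘ₗ q)) = (∑ j, c j • T j) ∘ₗ q := by
      intro c
      ext v
      simp [LinearMap.sum_apply]
    refine ⟨f, ?_, fun c hc => ?_⟩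
    · rw [hf, hcomp, hq]
      simp
    · rw [hf, hcomp] at hc
      right
      have hb := bij_of_det_ne_zero hc
      have : Function.Surjective (⇑(∑ j, c j • T j) ∘ ⇑q) := by
        rw [← LinearMap.coe_comp]
        exact hb.surjective
      exact Function.Surjective.of_comp this

end Poly


lemma degree_one_single {m : Fin r →₀ ℕ} (hm : (Finsupp.weight (1 : Fin r → ℕ)) m = 1) :
    ∃ j, m = Finsupp.single j 1 := by
  rw [degree_eq_sum_univ] at hm
  have hex : ∃ j ∈ Finset.univ, m j ≠ 0 :=
    Finset.exists_ne_zero_of_sum_ne_zero (by rw [hm]; exact one_ne_zero)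
  obtain ⟨j, -, hj⟩ := hex
  refine ⟨j, ?_⟩
  have hsplit : m j + ∑ a ∈ Finset.univ.erase j, m a = 1 := by
    rw [Finset.add_sum_erase _ _ (Finset.mem_univ j)]
    exact hm
  have hmj : m j = 1 := by omega
  have hrest : ∑ a ∈ Finset.univ.erase j, m a = 0 := by omega
  ext a
  rcases eq_or_ne a j with rfl | ha
  · simp [hmj, Finsupp.single_apply]
  · rw [Finsupp.single_apply, if_neg (Ne.symm ha)]
    exact Finset.sum_eq_zero_iff.mp hrest a (Finset.mem_erase.mpr ⟨ha, Finset.mem_univ a⟩)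

lemma ell_decomp {ℓ : MvPolynomial (Fin r) k} (hℓ : ℓ ∈ homogeneousSubmodule (Fin r) k 1) :
    ℓ = ell (fun j => coeff (Finsupp.single j 1) ℓ) := by
  apply MvPolynomial.ext
  intro m
  rw [ell, coeff_sum]
  simp_rw [coeff_C_mul, coeff_X']
  by_cases hm : ∃ j, m = Finsupp.single j 1
  · obtain ⟨j0, rfl⟩ := hm
    rw [Finset.sum_eq_single j0 (fun j _ hj => by
        rw [if_neg (fun h => hj (Finsupp.single_left_injective one_ne_zero h)), mul_zero])
      (fun h => absurd (Finset.mem_univ j0) h)]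
    rw [if_pos rfl, mul_one]
  · have h0 : coeff m ℓ = 0 := by
      by_contra hne
      exact hm ((degree_one_single (hℓ hne)).imp fun j h => h)
    rw [h0, Finset.sum_eq_zero fun j _ => by
      rw [if_neg (fun h => hm ⟨j, h.symm⟩), mul_zero]]


end Stmt19

/-- for a monomial artinian algebra over an infinite field, the WLP (for a
general linear form) holds iff the specific linear form `ℓ = x_1 + ... + x_r` has maximal
rank in every degree. -/
theorem stmt19 (k : Type*) [Field k] [Infinite k] (r : ℕ) (S : Set (Fin r →₀ ℕ))
    (I : Ideal (MvPolynomial (Fin r) k))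
    (hI : I = Ideal.span ((fun s => (monomial s (1 : k))) '' S))
    (hart : Module.Finite k (MvPolynomial (Fin r) k ⧸ I)) :
    (∃ ℓ ∈ homogeneousSubmodule (Fin r) k 1, ∀ i : ℕ,
      mulInj I ℓ i ∨ mulSurj I ℓ i (i + 1)) ↔
    (∀ i : ℕ, mulInj I (∑ j, (X j : MvPolynomial (Fin r) k)) i ∨
      mulSurj I (∑ j, (X j : MvPolynomial (Fin r) k)) i (i + 1)) := by
  classical
  constructor
  · rintro ⟨ℓ, hℓ1, hℓ⟩
    set c₀ : Fin r → k := fun j => coeff (Finsupp.single j 1) ℓ with hc₀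
    have hdec : ℓ = Stmt19.ell c₀ := Stmt19.ell_decomp hℓ1
    have hIS : ∀ i, Function.Injective ⇑(Stmt19.mulQ I (Stmt19.ell c₀) (Stmt19.ell_mem c₀) i) ∨
        Function.Surjective ⇑(Stmt19.mulQ I (Stmt19.ell c₀) (Stmt19.ell_mem c₀) i) := by
      intro i
      rcases hℓ i with h | h
      · exact Or.inl ((Stmt19.inj_iff I _ _ i).mpr (hdec ▸ h))
      · exact Or.inr ((Stmt19.surj_iff I _ _ i).mpr (hdec ▸ h))
    obtain ⟨D, hD⟩ := Stmt19.high_degree_mem S I hI hart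
    have key : ∀ i : ℕ, ∃ f : MvPolynomial (Fin r) k, eval c₀ f ≠ 0 ∧
        ∀ c : Fin r → k, eval c f ≠ 0 →
          (mulInj I (Stmt19.ell c) i ∨ mulSurj I (Stmt19.ell c) i (i + 1)) := by
      intro i
      have h := hIS i
      rw [Stmt19.mulQ_ell] at h
      obtain ⟨f, hf0, hfc⟩ := Stmt19.poly_lemma (fun j => Stmt19.mulQ I (X j)
        (Stmt19.X_mem_homog j) i) c₀ h
      refine ⟨f, hf0, fun c hc => ?_⟩
      rcases hfc c hc with h' | h'
      · exact Or.inl ((Stmt19.inj_iff I _ (Stmt19.ell_mem c) i).mp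
          (by rw [Stmt19.mulQ_ell]; exact h'))
      · exact Or.inr ((Stmt19.surj_iff I _ (Stmt19.ell_mem c) i).mp
          (by rw [Stmt19.mulQ_ell]; exact h'))
    choose f hf0 hfc using key
    set F : MvPolynomial (Fin r) k := (∏ j, X j) * ∏ i ∈ Finset.range D, f i with hF
    have hFne : F ≠ 0 := by
      refine mul_ne_zero (Finset.prod_ne_zero_iff.mpr fun j _ => X_ne_zero j)
        (Finset.prod_ne_zero_iff.mpr fun i _ => fun h0 => hf0 i ?_)
      rw [h0, map_zero]
    obtain ⟨c, hc⟩ : ∃ c : Fin r → k, eval c F ≠ 0 := by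
      by_contra hcon
      push_neg at hcon
      exact hFne (MvPolynomial.funext fun x => by rw [hcon x, map_zero])
    rw [map_mul] at hc
    have hc1 : eval c (∏ j, (X j : MvPolynomial (Fin r) k)) ≠ 0 := fun h => hc (by rw [h, zero_mul])
    have hc2 : eval c (∏ i ∈ Finset.range D, f i) ≠ 0 := fun h => hc (by rw [h, mul_zero])
    have hcj : ∀ j, c j ≠ 0 := by
      intro j
      rw [map_prod] at hc1
      simp_rw [eval_X] at hc1
      exact Finset.prod_ne_zero_iff.mp hc1 j (Finset.mem_univ j)
    have hfi : ∀ i ∈ Finset.range D, eval c (f i) ≠ 0 := by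
      rw [map_prod] at hc2
      exact Finset.prod_ne_zero_iff.mp hc2
    intro i
    by_cases hiD : i < D
    · rcases hfc i c (hfi i (Finset.mem_range.mpr hiD)) with h | h
      · exact Or.inl (Stmt19.transfer_inj hI hcj i h)
      · exact Or.inr (Stmt19.transfer_surj hI hcj i (i + 1) h)
    · exact Or.inl fun g hg _ => hD i (le_of_not_gt hiD) g hg
  · intro h
    exact ⟨∑ j, X j, Submodule.sum_mem _ fun j _ => Stmt19.X_mem_homog j, h⟩
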